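/- Let k ≥ 2, let a_0,…,a_k, b_0,…,b_k ∈ ℝ, let g_n : ℝ → ℝ for n ≥ 0, and suppose the complexified polynomials P and Q have a common non-real root ρ = μ(cos θ + i sin θ) with μ > 0 and sin θ ≠ 0. Let p be a positive integer with ρ^p ≠ 1. If the real second factor equation (FE1) has a solution (r_n) that is periodic with prime (minimal) period p, then equation (★) has a real solution (x_n) that is periodic with prime period p. -/

import Mathlib

open Finset Polynomial

/-- The polynomial `P(u) = u^(k+1) - ∑_{i=0}^{k} a_i u^(k-i)`. -/
noncomputable def polyP {F : Type*} [Field F] (k : ℕ) (a : ℕ → F) : Polynomial F :=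
  X ^ (k + 1) - ∑ i ∈ range (k + 1), C (a i) * X ^ (k - i)

/-- The polynomial `Q(u) = ∑_{i=0}^{k} b_i u^(k-i)`. -/
noncomputable def polyQ {F : Type*} [Field F] (k : ℕ) (b : ℕ → F) : Polynomial F :=
  ∑ i ∈ range (k + 1), C (b i) * X ^ (k - i)

/-- `p_i = ρ^(i+1) - a_0 ρ^i - a_1 ρ^(i-1) - ⋯ - a_i`. -/
def coefp {F : Type*} [Field F] (a : ℕ → F) (ρ : F) (i : ℕ) : F :=
  ρ ^ (i + 1) - ∑ m ∈ range (i + 1), a m * ρ ^ (i - m)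

/-- `q_i = b_0 ρ^i + b_1 ρ^(i-1) + ⋯ + b_i`. -/
def coefq {F : Type*} [Field F] (b : ℕ → F) (ρ : F) (i : ℕ) : F :=
  ∑ m ∈ range (i + 1), b m * ρ ^ (i - m)

/-- `p′_j = γ^(j+1) + p_0 γ^j + ⋯ + p_j`. -/
noncomputable def coefp' (a : ℕ → ℂ) (ρ γ : ℂ) (j : ℕ) : ℂ :=
  γ ^ (j + 1) + ∑ m ∈ range (j + 1), coefp a ρ m * γ ^ (j - m)

/-- `q′_j = q_0 γ^j + q_1 γ^(j-1) + ⋯ + q_j`. -/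
noncomputable def coefq' (b : ℕ → ℂ) (ρ γ : ℂ) (j : ℕ) : ℂ :=
  ∑ m ∈ range (j + 1), coefq b ρ m * γ ^ (j - m)

/-- `ρ = μ (cos θ + i sin θ)`. -/
noncomputable def rho (μ θ : ℝ) : ℂ :=
  (μ : ℂ) * ((Real.cos θ : ℂ) + (Real.sin θ : ℂ) * Complex.I)

/-- The real formula
`p′_j = μ^(j+1) sin((j+2)θ)/sin θ - (1/sin θ) ∑_{m=0}^{j} a_m μ^(j-m) sin((j-m+1)θ)`. -/
noncomputable def realP' (a : ℕ → ℝ) (μ θ : ℝ) (j : ℕ) : ℝ :=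
  μ ^ (j + 1) * Real.sin (((j + 2 : ℕ) : ℝ) * θ) / Real.sin θ -
    (1 / Real.sin θ) *
      ∑ m ∈ range (j + 1), a m * μ ^ (j - m) * Real.sin (((j - m + 1 : ℕ) : ℝ) * θ)

/-- The real formula `q′_j = (1/sin θ) ∑_{m=0}^{j} b_m μ^(j-m) sin((j-m+1)θ)`. -/
noncomputable def realQ' (b : ℕ → ℝ) (μ θ : ℝ) (j : ℕ) : ℝ :=
  (1 / Real.sin θ) *
    ∑ m ∈ range (j + 1), b m * μ ^ (j - m) * Real.sin (((j - m + 1 : ℕ) : ℝ) * θ)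

/-- A real sequence `x : ℤ → ℝ` is a solution of equation (★) with real data. -/
def IsSolutionStarR (k : ℕ) (a b : ℕ → ℝ) (g : ℤ → ℝ → ℝ) (x : ℤ → ℝ) : Prop :=
  ∀ n : ℤ, 0 ≤ n →
    x (n + 1) = (∑ i ∈ range (k + 1), a i * x (n - i)) +
      g n (∑ i ∈ range (k + 1), b i * x (n - i))

/-- A real sequence `r : ℤ → ℝ` is a solution of the real second factor equation (FE1):
`r_{n+1} = -∑_{j=0}^{k-2} p′_j r_{n-j} + g_n (∑_{j=0}^{k-2} q′_j r_{n-j})` for `n ≥ 0`,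
with the real coefficients `p′_j = realP' a μ θ j` and `q′_j = realQ' b μ θ j`. -/
def IsSolutionFE1R (k : ℕ) (a b : ℕ → ℝ) (g : ℤ → ℝ → ℝ) (μ θ : ℝ) (r : ℤ → ℝ) : Prop :=
  ∀ n : ℤ, 0 ≤ n →
    r (n + 1) = -(∑ j ∈ range (k - 1), realP' a μ θ j * r (n - j)) +
      g n (∑ j ∈ range (k - 1), realQ' b μ θ j * r (n - j))

namespace Stmt17Aux

noncomputable def seqR (γ init : ℂ) (c : ℕ → ℂ) : ℕ → ℂ
  | 0 => init
  | i + 1 => γ * seqR γ init c i + c (i + 1)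

lemma seqR_zero (γ init : ℂ) (c : ℕ → ℂ) : seqR γ init c 0 = init := rfl

lemma seqR_succ (γ init : ℂ) (c : ℕ → ℂ) (i : ℕ) :
    seqR γ init c (i + 1) = γ * seqR γ init c i + c (i + 1) := rfl

lemma seqR_congr (γ : ℂ) {i1 i2 : ℂ} {c1 c2 : ℕ → ℂ} (h : i1 = i2)
    (hc : ∀ i, c1 i = c2 i) : ∀ j, seqR γ i1 c1 j = seqR γ i2 c2 j := by
  intro j
  induction j with
  | zero => simpa [seqR_zero] using h
  | succ j ih => rw [seqR_succ, seqR_succ, ih, hc]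

lemma seqR_add (γ a1 a2 : ℂ) (c1 c2 : ℕ → ℂ) : ∀ j,
    seqR γ (a1 + a2) (fun i => c1 i + c2 i) j = seqR γ a1 c1 j + seqR γ a2 c2 j := by
  intro j
  induction j with
  | zero => rfl
  | succ j ih => rw [seqR_succ, seqR_succ, seqR_succ, ih]; ring

lemma seqR_shift' (γ ε init : ℂ) (c : ℕ → ℂ) (h0 : init = ε + c 0) : ∀ j,
    seqR γ init c j = ε * γ ^ j + seqR γ (c 0) c j := by
  intro j
  induction j with
  | zero => simp [seqR_zero, h0]
  | succ j ih => rw [seqR_succ, seqR_succ, ih]; ring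

lemma seqR_closed' (γ init : ℂ) (c : ℕ → ℂ) (h0 : init = c 0) : ∀ i,
    seqR γ init c i = ∑ m ∈ Finset.range (i + 1), c m * γ ^ (i - m) := by
  intro i
  induction i with
  | zero => simp [seqR_zero, h0]
  | succ i ih =>
    rw [seqR_succ, ih, Finset.mul_sum,
      Finset.sum_range_succ (fun m => c m * γ ^ (i + 1 - m)) (i + 1)]
    simp only [Nat.sub_self, pow_zero, mul_one]
    congr 1
    refine Finset.sum_congr rfl fun m hm => ?_
    rw [Finset.mem_range] at hm
    rw [show i + 1 - m = (i - m) + 1 by omega, pow_succ]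
    ring

lemma seqR_pw (γ δ : ℂ) : ∀ j,
    (γ - δ) * seqR δ (δ + γ) (fun i => γ ^ (i + 1)) j = γ ^ (j + 2) - δ ^ (j + 2) := by
  intro j
  induction j with
  | zero => rw [seqR_zero]; ring
  | succ j ih => rw [seqR_succ]; linear_combination δ * ih

lemma seqR_diff' (γ δ init : ℂ) (c F : ℕ → ℂ) (h0 : init = c 0)
    (hF : ∀ i, F i = ∑ m ∈ Finset.range (i + 1), c m * γ ^ (i - m)) : ∀ j,
    (γ - δ) * seqR δ init F j =
      ∑ t ∈ Finset.range (j + 1), c t * (γ ^ (j + 1 - t) - δ ^ (j + 1 - t)) := by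
  intro j
  induction j with
  | zero => rw [seqR_zero, h0]; simp [Finset.sum_range_one]; ring
  | succ j ih =>
    have hstep : (γ - δ) * seqR δ init F (j + 1)
        = δ * ((γ - δ) * seqR δ init F j) + (γ - δ) * F (j + 1) := by
      rw [seqR_succ]; ring
    rw [hstep, ih, hF (j + 1),
      Finset.sum_range_succ (fun m => c m * γ ^ (j + 1 - m)) (j + 1),
      Finset.sum_range_succ (fun t => c t * (γ ^ (j + 1 + 1 - t) - δ ^ (j + 1 + 1 - t))) (j + 1)]
    rw [show j + 1 + 1 - (j + 1) = 1 by omega]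
    simp only [Nat.sub_self, pow_zero, mul_one, pow_one]
    have hsum : δ * (∑ t ∈ Finset.range (j + 1), c t * (γ ^ (j + 1 - t) - δ ^ (j + 1 - t)))
        + (γ - δ) * (∑ m ∈ Finset.range (j + 1), c m * γ ^ (j + 1 - m))
        = ∑ t ∈ Finset.range (j + 1), c t * (γ ^ (j + 1 + 1 - t) - δ ^ (j + 1 + 1 - t)) := by
      rw [Finset.mul_sum, Finset.mul_sum, ← Finset.sum_add_distrib]
      refine Finset.sum_congr rfl fun t ht => ?_
      rw [Finset.mem_range] at ht
      rw [show j + 1 + 1 - t = (j + 1 - t) + 1 by omega, pow_succ, pow_succ]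
      ring
    linear_combination hsum

lemma telescope' (γ : ℂ) (co F : ℕ → ℂ) (h0 : co 0 = F 0)
    (hrec : ∀ i, co (i + 1) = F (i + 1) - γ * F i) (u : ℤ → ℂ) (n : ℤ) : ∀ N : ℕ,
    ∑ i ∈ Finset.range (N + 1), co i * u (n - i) =
      (∑ i ∈ Finset.range N, F i * (u (n - i) - γ * u (n - i - 1))) + F N * u (n - N) := by
  intro N
  induction N with
  | zero => simp [h0]
  | succ N ih =>
    rw [Finset.sum_range_succ (fun i => co i * u (n - (i : ℤ))) (N + 1), ih, hrec N,
      Finset.sum_range_succ (fun i => F i * (u (n - i) - γ * u (n - i - 1))) N]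
    rw [show n - ((N + 1 : ℕ) : ℤ) = n - (N : ℤ) - 1 by push_cast; ring]
    ring

lemma periodic_first_order {p : ℕ} (γ : ℂ) (hγ : γ ^ p ≠ 1)
    (w : ℤ → ℂ) (hw : ∀ n, w (n + p) = w n) (n : ℤ) :
    (∑ t ∈ Finset.range p, γ ^ t * w (n - t)) / (1 - γ ^ p)
      - γ * ((∑ t ∈ Finset.range p, γ ^ t * w (n - 1 - t)) / (1 - γ ^ p)) = w n := by
  have h1 : (1 : ℂ) - γ ^ p ≠ 0 := sub_ne_zero.mpr (Ne.symm hγ)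
  have key : (∑ t ∈ Finset.range p, γ ^ t * w (n - t))
      - γ * (∑ t ∈ Finset.range p, γ ^ t * w (n - 1 - t)) = (1 - γ ^ p) * w n := by
    rw [Finset.mul_sum]
    have e1 : ∀ t ∈ Finset.range p, γ * (γ ^ t * w (n - 1 - t))
        = γ ^ (t + 1) * w (n - ((t + 1 : ℕ) : ℤ)) := by
      intro t _
      rw [show n - 1 - (t : ℤ) = n - ((t + 1 : ℕ) : ℤ) by push_cast; ring, pow_succ]
      ring
    rw [Finset.sum_congr rfl e1, ← Finset.sum_sub_distrib]
    have e2 := Finset.sum_range_sub' (fun t : ℕ => γ ^ t * w (n - t)) p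
    rw [e2]
    have e3 : w (n - (p : ℤ)) = w n := by
      have h := hw (n - p); rw [sub_add_cancel] at h; exact h.symm
    simp only [pow_zero, one_mul, Nat.cast_zero, sub_zero, e3]
    ring
  rw [← mul_div_assoc, div_sub_div_same, key, mul_div_cancel_left₀ _ h1]

lemma sum_shift_per {p : ℕ} (γ : ℂ) (w : ℤ → ℂ) (hw : ∀ n, w (n + p) = w n) (n : ℤ) :
    ∑ t ∈ Finset.range p, γ ^ t * w (n + p - t) = ∑ t ∈ Finset.range p, γ ^ t * w (n - t) := by
  refine Finset.sum_congr rfl fun t _ => ?_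
  rw [show n + (p : ℤ) - t = (n - t) + p by ring, hw]

lemma rho_eq_exp (μ θ : ℝ) : rho μ θ = (μ : ℂ) * Complex.exp (θ * Complex.I) := by
  simp only [rho, Complex.exp_mul_I, Complex.ofReal_cos, Complex.ofReal_sin]

lemma rho_pow (μ θ : ℝ) (s : ℕ) :
    (rho μ θ) ^ s = ((μ ^ s * Real.cos ((s : ℝ) * θ) : ℝ) : ℂ) +
      ((μ ^ s * Real.sin ((s : ℝ) * θ) : ℝ) : ℂ) * Complex.I := by
  rw [rho_eq_exp, mul_pow, ← Complex.exp_nat_mul]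
  rw [show (s : ℂ) * ((θ : ℝ) * Complex.I) = (((s : ℝ) * θ : ℝ) : ℂ) * Complex.I by
    push_cast; ring]
  rw [Complex.exp_mul_I, ← Complex.ofReal_cos, ← Complex.ofReal_sin]
  push_cast
  ring

lemma aux_im (A B : ℝ) : ((A : ℂ) + (B : ℂ) * Complex.I).im = B := by simp

lemma aux_re (A B : ℝ) : ((A : ℂ) + (B : ℂ) * Complex.I).re = A := by simp

lemma rho_pow_sub (μ θ : ℝ) (s : ℕ) :
    (rho μ θ) ^ s - (starRingEnd ℂ) (rho μ θ) ^ s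
      = 2 * ((μ ^ s * Real.sin ((s : ℝ) * θ) : ℝ) : ℂ) * Complex.I := by
  rw [← map_pow, Complex.sub_conj, rho_pow, aux_im]
  push_cast
  ring

lemma rho_sub_conj (μ θ : ℝ) : rho μ θ - (starRingEnd ℂ) (rho μ θ)
    = 2 * ((μ * Real.sin θ : ℝ) : ℂ) * Complex.I := by
  have h := rho_pow_sub μ θ 1
  simpa using h

lemma realQ'_mul (b : ℕ → ℝ) (μ θ : ℝ) (hθ : Real.sin θ ≠ 0) (j : ℕ) :
    (μ * Real.sin θ) * realQ' b μ θ j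
      = ∑ t ∈ Finset.range (j + 1),
          b t * (μ ^ (j + 1 - t) * Real.sin (((j + 1 - t : ℕ) : ℝ) * θ)) := by
  rw [realQ']
  rw [show (μ * Real.sin θ) * ((1 / Real.sin θ) *
      (∑ m ∈ Finset.range (j + 1), b m * μ ^ (j - m) * Real.sin (((j - m + 1 : ℕ) : ℝ) * θ)))
      = μ * (∑ m ∈ Finset.range (j + 1), b m * μ ^ (j - m) * Real.sin (((j - m + 1 : ℕ) : ℝ) * θ))
      by rw [mul_assoc, ← mul_assoc (Real.sin θ), mul_one_div_cancel hθ, one_mul]]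
  rw [Finset.mul_sum]
  refine Finset.sum_congr rfl fun m hm => ?_
  rw [Finset.mem_range] at hm
  rw [show j + 1 - m = (j - m) + 1 by omega, pow_succ]
  ring

lemma Gq_formula (b : ℕ → ℝ) (μ θ : ℝ) (hθ : Real.sin θ ≠ 0) (j : ℕ) :
    ∑ t ∈ Finset.range (j + 1), ((b t : ℝ) : ℂ) *
        ((rho μ θ) ^ (j + 1 - t) - (starRingEnd ℂ) (rho μ θ) ^ (j + 1 - t))
      = (rho μ θ - (starRingEnd ℂ) (rho μ θ)) * ((realQ' b μ θ j : ℝ) : ℂ) := by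
  calc ∑ t ∈ Finset.range (j + 1), ((b t : ℝ) : ℂ) *
        ((rho μ θ) ^ (j + 1 - t) - (starRingEnd ℂ) (rho μ θ) ^ (j + 1 - t))
      = ∑ t ∈ Finset.range (j + 1), (2 * Complex.I) *
          ((b t * (μ ^ (j + 1 - t) * Real.sin (((j + 1 - t : ℕ) : ℝ) * θ)) : ℝ) : ℂ) := by
        refine Finset.sum_congr rfl fun t ht => ?_
        rw [rho_pow_sub]
        push_cast
        ring
    _ = (2 * Complex.I) * (((μ * Real.sin θ) * realQ' b μ θ j : ℝ) : ℂ) := by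
        rw [← Finset.mul_sum, realQ'_mul b μ θ hθ j]
        push_cast
        ring
    _ = (rho μ θ - (starRingEnd ℂ) (rho μ θ)) * ((realQ' b μ θ j : ℝ) : ℂ) := by
        rw [rho_sub_conj]
        push_cast
        ring

lemma realP'_mul (a : ℕ → ℝ) (μ θ : ℝ) (hθ : Real.sin θ ≠ 0) (j : ℕ) :
    (μ * Real.sin θ) * realP' a μ θ j
      = μ ^ (j + 2) * Real.sin (((j + 2 : ℕ) : ℝ) * θ)
        - ∑ t ∈ Finset.range (j + 1),
            a t * (μ ^ (j + 1 - t) * Real.sin (((j + 1 - t : ℕ) : ℝ) * θ)) := by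
  rw [realP']
  rw [mul_sub]
  congr 1
  · rw [show (μ * Real.sin θ) * (μ ^ (j + 1) * Real.sin (((j + 2 : ℕ) : ℝ) * θ) / Real.sin θ)
        = μ * (μ ^ (j + 1) * Real.sin (((j + 2 : ℕ) : ℝ) * θ)) by field_simp]
    rw [show j + 2 = (j + 1) + 1 by omega, pow_succ]
    ring
  · rw [show (μ * Real.sin θ) * ((1 / Real.sin θ) *
        (∑ m ∈ Finset.range (j + 1), a m * μ ^ (j - m) * Real.sin (((j - m + 1 : ℕ) : ℝ) * θ)))
        = μ * (∑ m ∈ Finset.range (j + 1), a m * μ ^ (j - m) * Real.sin (((j - m + 1 : ℕ) : ℝ) * θ))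
        by rw [mul_assoc, ← mul_assoc (Real.sin θ), mul_one_div_cancel hθ, one_mul]]
    rw [Finset.mul_sum]
    refine Finset.sum_congr rfl fun m hm => ?_
    rw [Finset.mem_range] at hm
    rw [show j + 1 - m = (j - m) + 1 by omega, pow_succ]
    ring

lemma Bp_formula (a : ℕ → ℝ) (μ θ : ℝ) (hθ : Real.sin θ ≠ 0) (j : ℕ) :
    ((rho μ θ) ^ (j + 2) - (starRingEnd ℂ) (rho μ θ) ^ (j + 2))
      + ∑ t ∈ Finset.range (j + 1), (-((a t : ℝ) : ℂ)) *
          ((rho μ θ) ^ (j + 1 - t) - (starRingEnd ℂ) (rho μ θ) ^ (j + 1 - t))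
      = (rho μ θ - (starRingEnd ℂ) (rho μ θ)) * ((realP' a μ θ j : ℝ) : ℂ) := by
  have h1 : ∑ t ∈ Finset.range (j + 1), (-((a t : ℝ) : ℂ)) *
        ((rho μ θ) ^ (j + 1 - t) - (starRingEnd ℂ) (rho μ θ) ^ (j + 1 - t))
      = ∑ t ∈ Finset.range (j + 1), (-(2 * Complex.I)) *
          ((a t * (μ ^ (j + 1 - t) * Real.sin (((j + 1 - t : ℕ) : ℝ) * θ)) : ℝ) : ℂ) := by
    refine Finset.sum_congr rfl fun t ht => ?_
    rw [rho_pow_sub]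
    push_cast
    ring
  rw [h1, ← Finset.mul_sum, rho_pow_sub μ θ (j + 2)]
  have h2 := realP'_mul a μ θ hθ j
  have h3 : ((μ * Real.sin θ * realP' a μ θ j : ℝ) : ℂ)
      = ((μ ^ (j + 2) * Real.sin (((j + 2 : ℕ) : ℝ) * θ)
        - ∑ t ∈ Finset.range (j + 1),
            a t * (μ ^ (j + 1 - t) * Real.sin (((j + 1 - t : ℕ) : ℝ) * θ)) : ℝ) : ℂ) := by
    exact_mod_cast congrArg (fun x : ℝ => (x : ℂ)) h2
  rw [rho_sub_conj]
  push_cast at h3 ⊢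
  linear_combination (-2) * Complex.I * h3

end Stmt17Aux

open Stmt17Aux in
/-- with `ρ = μ e^{iθ}` (`μ > 0`, `sin θ ≠ 0`) a common non-real root of
the complexified `P` and `Q` and `ρ^p ≠ 1`, if the real second factor equation (FE1)
has a solution periodic with prime (minimal) period `p`, then equation (★) has a real
solution periodic with prime period `p`. -/
theorem statement17 (k : ℕ) (hk : 2 ≤ k) (a b : ℕ → ℝ) (g : ℤ → ℝ → ℝ) (μ θ : ℝ)
    (hμ : 0 < μ) (hθ : Real.sin θ ≠ 0)
    (hP : (polyP k (fun i => (a i : ℂ))).eval (rho μ θ) = 0)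
    (hQ : (polyQ k (fun i => (b i : ℂ))).eval (rho μ θ) = 0)
    (p : ℕ) (hp : 0 < p) (hρp : (rho μ θ) ^ p ≠ 1)
    (r : ℤ → ℝ) (hr : IsSolutionFE1R k a b g μ θ r)
    (hper : ∀ n : ℤ, -(k : ℤ) + 2 ≤ n → r (n + p) = r n)
    (hmin : ∀ q : ℕ, 0 < q → (∀ n : ℤ, -(k : ℤ) + 2 ≤ n → r (n + q) = r n) → p ≤ q) :
    ∃ x : ℤ → ℝ, IsSolutionStarR k a b g x ∧
      (∀ n : ℤ, -(k : ℤ) ≤ n → x (n + p) = x n) ∧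
      (∀ q : ℕ, 0 < q → (∀ n : ℤ, -(k : ℤ) ≤ n → x (n + q) = x n) → p ≤ q) := by
  obtain ⟨k', rfl⟩ : ∃ k'', k = k'' + 2 := ⟨k - 2, by omega⟩
  clear hk
  set ρ : ℂ := rho μ θ with hρdef
  set ρ' : ℂ := (starRingEnd ℂ) ρ with hρ'def
  have hρ'p1 : ρ' ^ p ≠ 1 := by
    rw [hρ'def, ← map_pow]
    intro h
    apply hρp
    have h2 := congrArg (starRingEnd ℂ) h
    simpa using h2
  have hD : ρ - ρ' = 2 * ((μ * Real.sin θ : ℝ) : ℂ) * Complex.I := by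
    rw [hρ'def, hρdef]; exact rho_sub_conj μ θ
  have hD0 : ρ - ρ' ≠ 0 := by
    rw [hD]
    intro h
    rcases mul_eq_zero.mp h with h | h
    · rcases mul_eq_zero.mp h with h | h
      · exact two_ne_zero h
      · rw [Complex.ofReal_eq_zero] at h
        exact (mul_ne_zero hμ.ne' hθ) h
    · exact Complex.I_ne_zero h
  have hpZ : (0 : ℤ) < (p : ℤ) := by exact_mod_cast hp
  -- periodic extension of r
  set rt : ℤ → ℝ := fun n => r ((n + k') % (p : ℤ) - k') with hrtdef
  have hper' : ∀ m : ℤ, -(k' : ℤ) ≤ m → r (m + p) = r m := by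
    intro m hm
    apply hper
    push_cast
    omega
  have hiter : ∀ (q : ℕ) (m : ℤ), -(k' : ℤ) ≤ m → r (m + p * q) = r m := by
    intro q
    induction q with
    | zero => intro m _; simp
    | succ q ih =>
      intro m hm
      have hpq : (0 : ℤ) ≤ (p : ℤ) * q := by positivity
      rw [show m + (p : ℤ) * ((q + 1 : ℕ) : ℤ) = (m + (p : ℤ) * (q : ℕ)) + p by push_cast; ring]
      rw [hper' _ (by omega), ih m hm]
  have hrt_eq : ∀ n : ℤ, -(k' : ℤ) ≤ n → rt n = r n := by
    intro n hn
    have ht0 : (0 : ℤ) ≤ n + k' := by omega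
    have hmod := Int.emod_add_mul_ediv (n + k') (p : ℤ)
    have hq0 : 0 ≤ (n + k') / (p : ℤ) := Int.ediv_nonneg ht0 hpZ.le
    have hm0 : 0 ≤ (n + k') % (p : ℤ) := Int.emod_nonneg _ hpZ.ne'
    obtain ⟨q, hq⟩ : ∃ q : ℕ, ((q : ℤ)) = (n + k') / (p : ℤ) :=
      ⟨((n + k') / (p : ℤ)).toNat, Int.toNat_of_nonneg hq0⟩
    have h1 : r n = r (((n + k') % (p : ℤ) - k') + p * q) := by
      congr 1
      rw [hq]
      linarith [hmod]
    simp only [hrtdef]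
    rw [h1, hiter q _ (by omega)]
  have hrt_per : ∀ n : ℤ, rt (n + p) = rt n := by
    intro n
    simp only [hrtdef]
    congr 2
    rw [show n + (p : ℤ) + k' = (n + k') + (p : ℤ) * 1 by ring, Int.add_mul_emod_self_left]
  -- complex machinery
  set w : ℤ → ℂ := fun n => ((rt n : ℝ) : ℂ) with hwdef
  have hw_per : ∀ n : ℤ, w (n + p) = w n := by
    intro n; simp only [hwdef, hrt_per n]
  set y : ℤ → ℂ := fun n => (∑ t ∈ range p, ρ ^ t * w (n - t)) / (1 - ρ ^ p) with hydef
  have hy_rec : ∀ n : ℤ, y n - ρ * y (n - 1) = w n := by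
    intro n
    simp only [hydef]
    exact periodic_first_order ρ hρp w hw_per n
  have hy_per : ∀ n : ℤ, y (n + p) = y n := by
    intro n
    simp only [hydef]
    rw [sum_shift_per ρ w hw_per n]
  set z : ℤ → ℂ := fun n => (∑ t ∈ range p, ρ' ^ t * y (n - t)) / (1 - ρ' ^ p) with hzdef
  have hz_rec : ∀ n : ℤ, z n - ρ' * z (n - 1) = y n := by
    intro n
    simp only [hzdef]
    exact periodic_first_order ρ' hρ'p1 y hy_per n
  have hz_per : ∀ n : ℤ, z (n + p) = z n := by
    intro n
    simp only [hzdef]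
    rw [sum_shift_per ρ' y hy_per n]
  set x : ℤ → ℝ := fun n => (z n).re with hxdef
  have hW : ∀ m : ℤ, (z m - ρ * z (m - 1)) - ρ' * (z (m - 1) - ρ * z (m - 1 - 1)) = w m := by
    intro m
    have h1 := hz_rec m
    have h2 := hz_rec (m - 1)
    have h3 := hy_rec m
    linear_combination h1 - ρ * h2 + h3
  -- coefficient sequences
  set Fq : ℕ → ℂ := seqR ρ ((b 0 : ℝ) : ℂ) (fun i => ((b i : ℝ) : ℂ)) with hFqdef
  set Gq : ℕ → ℂ := seqR ρ' ((b 0 : ℝ) : ℂ) Fq with hGqdef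
  set Ap : ℕ → ℂ := seqR ρ (ρ - ((a 0 : ℝ) : ℂ)) (fun i => -((a i : ℝ) : ℂ)) with hApdef
  set Bp : ℕ → ℂ := seqR ρ' (ρ' + (ρ - ((a 0 : ℝ) : ℂ))) Ap with hBpdef
  have hFq_rec : ∀ i, ((b (i + 1) : ℝ) : ℂ) = Fq (i + 1) - ρ * Fq i := by
    intro i; simp only [hFqdef, seqR_succ]; ring
  have hGq_rec : ∀ i, Fq (i + 1) = Gq (i + 1) - ρ' * Gq i := by
    intro i; simp only [hGqdef, seqR_succ]; ring
  have hFq_closed : ∀ i, Fq i = ∑ m ∈ range (i + 1), ((b m : ℝ) : ℂ) * ρ ^ (i - m) := by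
    intro i
    rw [hFqdef]
    exact seqR_closed' ρ ((b 0 : ℝ) : ℂ) (fun i => ((b i : ℝ) : ℂ)) rfl i
  have hQρ : ∑ i ∈ range (k' + 2 + 1), ((b i : ℝ) : ℂ) * ρ ^ (k' + 2 - i) = 0 := by
    have h := hQ
    simp only [polyQ, eval_finset_sum, eval_mul, eval_C, eval_pow, eval_X] at h
    exact h
  have hQρ' : ∑ i ∈ range (k' + 2 + 1), ((b i : ℝ) : ℂ) * ρ' ^ (k' + 2 - i) = 0 := by
    have h := congrArg (starRingEnd ℂ) hQρ
    simpa [map_sum, map_mul, map_pow, Complex.conj_ofReal, hρ'def] using h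
  have hFqk : Fq (k' + 2) = 0 := by
    rw [hFq_closed (k' + 2)]
    exact hQρ
  have hGqD : ∀ j, (ρ - ρ') * Gq j
      = ∑ t ∈ range (j + 1), ((b t : ℝ) : ℂ) * (ρ ^ (j + 1 - t) - ρ' ^ (j + 1 - t)) := by
    intro j
    rw [hGqdef]
    exact seqR_diff' ρ ρ' ((b 0 : ℝ) : ℂ) (fun i => ((b i : ℝ) : ℂ)) Fq rfl hFq_closed j
  have hGqk : Gq (k' + 1) = 0 := by
    have h := hGqD (k' + 1)
    rw [show k' + 1 + 1 = k' + 2 by omega] at h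
    have e1 : ∑ t ∈ range (k' + 2 + 1), ((b t : ℝ) : ℂ) * (ρ ^ (k' + 2 - t) - ρ' ^ (k' + 2 - t))
        = ∑ t ∈ range (k' + 2), ((b t : ℝ) : ℂ) * (ρ ^ (k' + 2 - t) - ρ' ^ (k' + 2 - t)) := by
      rw [Finset.sum_range_succ (fun t => ((b t : ℝ) : ℂ) * (ρ ^ (k' + 2 - t) - ρ' ^ (k' + 2 - t))) (k' + 2)]
      simp
    have e2 : ∑ t ∈ range (k' + 2 + 1), ((b t : ℝ) : ℂ) * (ρ ^ (k' + 2 - t) - ρ' ^ (k' + 2 - t))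
        = (∑ t ∈ range (k' + 2 + 1), ((b t : ℝ) : ℂ) * ρ ^ (k' + 2 - t))
          - ∑ t ∈ range (k' + 2 + 1), ((b t : ℝ) : ℂ) * ρ' ^ (k' + 2 - t) := by
      rw [← Finset.sum_sub_distrib]
      exact Finset.sum_congr rfl fun t _ => by ring
    have h3 : (ρ - ρ') * Gq (k' + 1) = 0 := by
      rw [h, ← e1, e2, hQρ, hQρ']
      ring
    exact (mul_eq_zero.mp h3).resolve_left hD0
  have hAp_rec : ∀ i, -((a (i + 1) : ℝ) : ℂ) = Ap (i + 1) - ρ * Ap i := by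
    intro i; simp only [hApdef, seqR_succ]; ring
  have hAp_closed : ∀ i, Ap i = ρ ^ (i + 1) + ∑ m ∈ range (i + 1), (-((a m : ℝ) : ℂ)) * ρ ^ (i - m) := by
    intro i
    have h1 : Ap i = ρ * ρ ^ i + seqR ρ (-((a 0 : ℝ) : ℂ)) (fun m => -((a m : ℝ) : ℂ)) i := by
      rw [hApdef]
      exact seqR_shift' ρ ρ _ _ (by rw [sub_eq_add_neg]) i
    rw [h1, seqR_closed' ρ (-((a 0 : ℝ) : ℂ)) (fun m => -((a m : ℝ) : ℂ)) rfl i, ← pow_succ']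
  have hPρ : ρ ^ (k' + 2 + 1) - ∑ i ∈ range (k' + 2 + 1), ((a i : ℝ) : ℂ) * ρ ^ (k' + 2 - i) = 0 := by
    have h := hP
    simp only [polyP, eval_sub, eval_finset_sum, eval_mul, eval_C, eval_pow, eval_X] at h
    exact h
  have hPρ' : ρ' ^ (k' + 2 + 1) - ∑ i ∈ range (k' + 2 + 1), ((a i : ℝ) : ℂ) * ρ' ^ (k' + 2 - i) = 0 := by
    have h := congrArg (starRingEnd ℂ) hPρ
    simpa [map_sub, map_sum, map_mul, map_pow, Complex.conj_ofReal, hρ'def] using h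
  have hApk : Ap (k' + 2) = 0 := by
    rw [hAp_closed (k' + 2)]
    have e : ∑ m ∈ range (k' + 2 + 1), (-((a m : ℝ) : ℂ)) * ρ ^ (k' + 2 - m)
        = -(∑ m ∈ range (k' + 2 + 1), ((a m : ℝ) : ℂ) * ρ ^ (k' + 2 - m)) := by
      simp [neg_mul, Finset.sum_neg_distrib]
    rw [e]
    linear_combination hPρ
  have hBp_rec : ∀ i, Ap (i + 1) = Bp (i + 1) - ρ' * Bp i := by
    intro i; simp only [hBpdef, seqR_succ]; ring
  have hBp_split : ∀ j, Bp j = seqR ρ' (ρ' + ρ) (fun i => ρ ^ (i + 1)) j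
      + seqR ρ' (-((a 0 : ℝ) : ℂ)) (fun i => ∑ m ∈ range (i + 1), (-((a m : ℝ) : ℂ)) * ρ ^ (i - m)) j := by
    intro j
    rw [hBpdef, ← seqR_add]
    exact seqR_congr ρ' (by ring) (fun i => by simpa using hAp_closed i) j
  have hBpD : ∀ j, (ρ - ρ') * Bp j
      = (ρ ^ (j + 2) - ρ' ^ (j + 2)) + ∑ t ∈ range (j + 1), (-((a t : ℝ) : ℂ)) * (ρ ^ (j + 1 - t) - ρ' ^ (j + 1 - t)) := by
    intro j
    rw [hBp_split j, mul_add, seqR_pw ρ ρ' j,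
      seqR_diff' ρ ρ' (-((a 0 : ℝ) : ℂ)) (fun m => -((a m : ℝ) : ℂ))
        (fun i => ∑ m ∈ range (i + 1), (-((a m : ℝ) : ℂ)) * ρ ^ (i - m)) rfl (fun _ => rfl) j]
  have hBpk : Bp (k' + 1) = 0 := by
    have h := hBpD (k' + 1)
    rw [show k' + 1 + 2 = k' + 2 + 1 by omega, show k' + 1 + 1 = k' + 2 by omega] at h
    have e1 : ∑ t ∈ range (k' + 2 + 1), (-((a t : ℝ) : ℂ)) * (ρ ^ (k' + 2 - t) - ρ' ^ (k' + 2 - t))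
        = ∑ t ∈ range (k' + 2), (-((a t : ℝ) : ℂ)) * (ρ ^ (k' + 2 - t) - ρ' ^ (k' + 2 - t)) := by
      rw [Finset.sum_range_succ (fun t => (-((a t : ℝ) : ℂ)) * (ρ ^ (k' + 2 - t) - ρ' ^ (k' + 2 - t))) (k' + 2)]
      simp
    have e2 : ∑ t ∈ range (k' + 2 + 1), (-((a t : ℝ) : ℂ)) * (ρ ^ (k' + 2 - t) - ρ' ^ (k' + 2 - t))
        = (∑ t ∈ range (k' + 2 + 1), ((a t : ℝ) : ℂ) * ρ' ^ (k' + 2 - t))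
          - ∑ t ∈ range (k' + 2 + 1), ((a t : ℝ) : ℂ) * ρ ^ (k' + 2 - t) := by
      rw [← Finset.sum_sub_distrib]
      exact Finset.sum_congr rfl fun t _ => by ring
    have h3 : (ρ - ρ') * Bp (k' + 1) = 0 := by
      rw [h, ← e1, e2]
      linear_combination hPρ - hPρ'
    exact (mul_eq_zero.mp h3).resolve_left hD0
  have hGq_real : ∀ j, Gq j = ((realQ' b μ θ j : ℝ) : ℂ) := by
    intro j
    apply mul_left_cancel₀ hD0
    rw [hGqD j, hρ'def, hρdef]
    exact Gq_formula b μ θ hθ j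
  have hBp_real : ∀ j, Bp j = ((realP' a μ θ j : ℝ) : ℂ) := by
    intro j
    apply mul_left_cancel₀ hD0
    rw [hBpD j, hρ'def, hρdef]
    exact Bp_formula a μ θ hθ j
  -- helper sequences for telescoping
  set Ap1 : ℕ → ℂ := fun i => Nat.casesOn i (1 : ℂ) (fun j => Ap j) with hAp1def
  set Bp1 : ℕ → ℂ := fun j => Nat.casesOn j (1 : ℂ) (fun i => Bp i) with hBp1def
  set co : ℕ → ℂ := fun i => Nat.casesOn i (1 : ℂ) (fun j => -((a j : ℝ) : ℂ)) with hcodef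
  set V : ℤ → ℂ := fun m => z m - ρ * z (m - 1) with hVdef
  have hAp1_zero : Ap1 0 = (1 : ℂ) := by rw [hAp1def]; rfl
  have hAp1_succ : ∀ i, Ap1 (i + 1) = Ap i := fun i => by rw [hAp1def]
  have hBp1_zero : Bp1 0 = (1 : ℂ) := by rw [hBp1def]; rfl
  have hBp1_succ : ∀ i, Bp1 (i + 1) = Bp i := fun i => by rw [hBp1def]
  have hco_zero : co 0 = (1 : ℂ) := by rw [hcodef]; rfl
  have hco_succ : ∀ i, co (i + 1) = -((a i : ℝ) : ℂ) := fun i => by rw [hcodef]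
  have hbF0 : ((b 0 : ℝ) : ℂ) = Fq 0 := by simp [hFqdef, seqR_zero]
  have hFG0 : Fq 0 = Gq 0 := by simp [hFqdef, hGqdef, seqR_zero]
  have hco0 : co 0 = Ap1 0 := by rw [hco_zero, hAp1_zero]
  have hcorec : ∀ i, co (i + 1) = Ap1 (i + 1) - ρ * Ap1 i := by
    intro i
    cases i with
    | zero =>
      rw [hco_succ, hAp1_succ, hAp1_zero]
      simp only [hApdef, seqR_zero]
      ring
    | succ i =>
      rw [hco_succ, hAp1_succ, hAp1_succ]
      exact hAp_rec i
  have hA1B0 : Ap1 0 = Bp1 0 := by rw [hAp1_zero, hBp1_zero]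
  have hA1rec : ∀ i, Ap1 (i + 1) = Bp1 (i + 1) - ρ' * Bp1 i := by
    intro i
    cases i with
    | zero =>
      rw [hAp1_succ, hBp1_succ, hBp1_zero]
      simp only [hApdef, hBpdef, seqR_zero]
      ring
    | succ i =>
      rw [hAp1_succ, hBp1_succ, hBp1_succ]
      exact hBp_rec i
  -- Identity I1
  have I1 : ∀ n : ℤ, ∑ i ∈ range (k' + 2 + 1), ((b i : ℝ) : ℂ) * z (n - i)
      = ∑ j ∈ range (k' + 1), ((realQ' b μ θ j : ℝ) : ℂ) * w (n - j) := by
    intro n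
    have T1 := telescope' ρ (fun i => ((b i : ℝ) : ℂ)) Fq hbF0 hFq_rec z n (k' + 2)
    rw [hFqk, zero_mul, add_zero] at T1
    have T1' : ∑ i ∈ range (k' + 2), Fq i * (z (n - i) - ρ * z (n - i - 1))
        = ∑ i ∈ range (k' + 2), Fq i * V (n - i) := by
      refine Finset.sum_congr rfl fun i _ => ?_
      simp only [hVdef]
    have T2 := telescope' ρ' Fq Gq hFG0 hGq_rec V n (k' + 1)
    rw [hGqk, zero_mul, add_zero, show k' + 1 + 1 = k' + 2 by omega] at T2
    have T2' : ∑ j ∈ range (k' + 1), Gq j * (V (n - j) - ρ' * V (n - j - 1))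
        = ∑ j ∈ range (k' + 1), ((realQ' b μ θ j : ℝ) : ℂ) * w (n - j) := by
      refine Finset.sum_congr rfl fun j _ => ?_
      rw [hGq_real j]
      congr 1
      simp only [hVdef]
      exact hW (n - j)
    exact T1.trans (T1'.trans (T2.trans T2'))
  -- Identity I2
  have I2 : ∀ n : ℤ, z (n + 1) - ∑ i ∈ range (k' + 2 + 1), ((a i : ℝ) : ℂ) * z (n - i)
      = w (n + 1) + ∑ j ∈ range (k' + 1), ((realP' a μ θ j : ℝ) : ℂ) * w (n - j) := by
    intro n
    have T0 : ∑ i ∈ range (k' + 2 + 1 + 1), co i * z (n + 1 - i)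
        = z (n + 1) - ∑ i ∈ range (k' + 2 + 1), ((a i : ℝ) : ℂ) * z (n - i) := by
      rw [Finset.sum_range_succ' (fun i => co i * z (n + 1 - i)) (k' + 2 + 1)]
      have e1 : ∀ i ∈ range (k' + 2 + 1),
          co (i + 1) * z (n + 1 - ((i + 1 : ℕ) : ℤ)) = -(((a i : ℝ) : ℂ) * z (n - i)) := by
        intro i _
        rw [hco_succ, show n + 1 - ((i + 1 : ℕ) : ℤ) = n - i by push_cast; ring]
        ring
      have e2 : ∑ i ∈ range (k' + 2 + 1), co (i + 1) * z (n + 1 - ((i + 1 : ℕ) : ℤ))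
          = ∑ i ∈ range (k' + 2 + 1), -(((a i : ℝ) : ℂ) * z (n - i)) :=
        Finset.sum_congr rfl e1
      rw [e2, Finset.sum_neg_distrib]
      have e3 : co 0 * z (n + 1 - ((0 : ℕ) : ℤ)) = z (n + 1) := by
        rw [hco_zero]
        norm_num
      rw [e3]
      ring
    have T1 := telescope' ρ co Ap1 hco0 hcorec z (n + 1) (k' + 2 + 1)
    have hA1k : Ap1 (k' + 2 + 1) = 0 := by
      rw [hAp1_succ]
      exact hApk
    rw [hA1k, zero_mul, add_zero] at T1
    have T1' : ∑ i ∈ range (k' + 2 + 1), Ap1 i * (z (n + 1 - i) - ρ * z (n + 1 - i - 1))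
        = ∑ i ∈ range (k' + 2 + 1), Ap1 i * V (n + 1 - i) := by
      refine Finset.sum_congr rfl fun i _ => ?_
      simp only [hVdef]
    have T2 := telescope' ρ' Ap1 Bp1 hA1B0 hA1rec V (n + 1) (k' + 2)
    have hB1k : Bp1 (k' + 2) = 0 := by
      rw [show k' + 2 = k' + 1 + 1 by omega, hBp1_succ]
      exact hBpk
    rw [hB1k, zero_mul, add_zero] at T2
    have T2' : ∑ j ∈ range (k' + 2), Bp1 j * (V (n + 1 - j) - ρ' * V (n + 1 - j - 1))
        = ∑ j ∈ range (k' + 2), Bp1 j * w (n + 1 - j) := by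
      refine Finset.sum_congr rfl fun j _ => ?_
      congr 1
      simp only [hVdef]
      exact hW (n + 1 - j)
    have T3 : ∑ j ∈ range (k' + 2), Bp1 j * w (n + 1 - j)
        = w (n + 1) + ∑ j ∈ range (k' + 1), ((realP' a μ θ j : ℝ) : ℂ) * w (n - j) := by
      rw [show k' + 2 = k' + 1 + 1 by omega,
        Finset.sum_range_succ' (fun j => Bp1 j * w (n + 1 - j)) (k' + 1)]
      have e1 : ∀ j ∈ range (k' + 1),
          Bp1 (j + 1) * w (n + 1 - ((j + 1 : ℕ) : ℤ)) = ((realP' a μ θ j : ℝ) : ℂ) * w (n - j) := by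
        intro j _
        rw [show n + 1 - ((j + 1 : ℕ) : ℤ) = n - j by push_cast; ring]
        congr 1
        rw [hBp1_succ]
        exact hBp_real j
      have e2 : ∑ j ∈ range (k' + 1), Bp1 (j + 1) * w (n + 1 - ((j + 1 : ℕ) : ℤ))
          = ∑ j ∈ range (k' + 1), ((realP' a μ θ j : ℝ) : ℂ) * w (n - j) :=
        Finset.sum_congr rfl e1
      rw [e2]
      have e3 : Bp1 0 * w (n + 1 - ((0 : ℕ) : ℤ)) = w (n + 1) := by
        rw [hBp1_zero]
        norm_num
      rw [e3]
      ring
    exact T0.symm.trans (T1.trans (T1'.trans (T2.trans (T2'.trans T3))))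
  -- real versions
  have I1R : ∀ n : ℤ, ∑ i ∈ range (k' + 2 + 1), b i * x (n - i)
      = ∑ j ∈ range (k' + 1), realQ' b μ θ j * rt (n - j) := by
    intro n
    have h := congrArg Complex.re (I1 n)
    simpa [Complex.re_sum, Complex.re_ofReal_mul, Complex.ofReal_re, hwdef, hxdef] using h
  have I2R : ∀ n : ℤ, x (n + 1) - ∑ i ∈ range (k' + 2 + 1), a i * x (n - i)
      = rt (n + 1) + ∑ j ∈ range (k' + 1), realP' a μ θ j * rt (n - j) := by
    intro n
    have h := congrArg Complex.re (I2 n)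
    simpa [Complex.sub_re, Complex.add_re, Complex.re_sum, Complex.re_ofReal_mul,
      Complex.ofReal_re, hwdef, hxdef] using h
  -- second order relation for minimality
  have hrho_eq : rho μ θ = ((μ * Real.cos θ : ℝ) : ℂ) + ((μ * Real.sin θ : ℝ) : ℂ) * Complex.I := by
    rw [rho]
    push_cast
    ring
  have hre : (rho μ θ).re = μ * Real.cos θ := by rw [hrho_eq, aux_re]
  have him : (rho μ θ).im = μ * Real.sin θ := by rw [hrho_eq, aux_im]
  have hrc : ρ + ρ' = ((2 * μ * Real.cos θ : ℝ) : ℂ) := by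
    rw [hρ'def, hρdef, Complex.add_conj, hre]
    push_cast
    ring
  have hrm : ρ * ρ' = ((μ ^ 2 : ℝ) : ℂ) := by
    rw [hρ'def, hρdef, Complex.mul_conj]
    have hnsq : Complex.normSq (rho μ θ) = μ ^ 2 := by
      rw [Complex.normSq_apply, hre, him]
      linear_combination (μ ^ 2) * (Real.sin_sq_add_cos_sq θ)
    rw [hnsq]
  have hreal : ∀ m : ℤ, rt m = x m - (2 * μ * Real.cos θ) * x (m - 1) + μ ^ 2 * x (m - 1 - 1) := by
    intro m
    have h := hW m
    have h2 : ((rt m : ℝ) : ℂ) = z m - ((2 * μ * Real.cos θ : ℝ) : ℂ) * z (m - 1)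
        + ((μ ^ 2 : ℝ) : ℂ) * z (m - 1 - 1) := by
      rw [← hrc, ← hrm]
      simp only [hwdef] at h
      linear_combination -h
    have h3 := congrArg Complex.re h2
    simpa [Complex.sub_re, Complex.add_re, Complex.re_ofReal_mul, Complex.ofReal_re,
      hxdef, ← Complex.ofReal_pow, Complex.cos_ofReal_re] using h3
  refine ⟨x, ?_, ?_, ?_⟩
  · intro n hn
    have hFE := hr n hn
    simp only [show k' + 2 - 1 = k' + 1 by omega] at hFE
    have e1 : r (n + 1) = rt (n + 1) := (hrt_eq _ (by omega)).symm
    have e2 : ∑ j ∈ range (k' + 1), realP' a μ θ j * r (n - j)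
        = ∑ j ∈ range (k' + 1), realP' a μ θ j * rt (n - j) := by
      refine Finset.sum_congr rfl fun j hj => ?_
      rw [Finset.mem_range] at hj
      rw [hrt_eq _ (by omega)]
    have e3 : ∑ j ∈ range (k' + 1), realQ' b μ θ j * r (n - j)
        = ∑ j ∈ range (k' + 1), realQ' b μ θ j * rt (n - j) := by
      refine Finset.sum_congr rfl fun j hj => ?_
      rw [Finset.mem_range] at hj
      rw [hrt_eq _ (by omega)]
    rw [e1, e2, e3] at hFE
    have hI2 := I2R n
    have hI1 := I1R n
    rw [hFE] at hI2
    rw [← hI1] at hI2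
    linarith [hI2]
  · intro n _
    simp only [hxdef]
    exact congrArg Complex.re (hz_per n)
  · intro q hq hxq
    refine hmin q hq ?_
    intro m hm
    have hm' : -(k' : ℤ) ≤ m := by push_cast at hm; omega
    have h1 : rt (m + q) = rt m := by
      rw [hreal (m + q), hreal m]
      have a1 : x (m + (q : ℤ)) = x m := hxq m (by push_cast; omega)
      have a2 : x (m + (q : ℤ) - 1) = x (m - 1) := by
        rw [show m + (q : ℤ) - 1 = (m - 1) + q by ring]
        exact hxq (m - 1) (by push_cast; omega)
      have a3 : x (m + (q : ℤ) - 1 - 1) = x (m - 1 - 1) := by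
        rw [show m + (q : ℤ) - 1 - 1 = (m - 1 - 1) + q by ring]
        exact hxq (m - 1 - 1) (by push_cast; omega)
      rw [a1, a2, a3]
    calc r (m + q) = rt (m + q) := (hrt_eq _ (by omega)).symm
      _ = rt m := h1
      _ = r m := hrt_eq _ hm'
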